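/- Let p∈U_δ(p₀) and μ>0. The operator H_μ(p) has an eigenvalue lying in (M(p),∞) if and only if μ>μ(p), and in that case the eigenvalue E(μ,p) is unique; equivalently, the equation Δ(μ,p;z)=0 has a solution z∈(M(p),∞) if and only if μ>μ(p), and then the solution is unique. -/

import Mathlib

open MeasureTheory Real Filter Topology

noncomputable section

/-- The 3-torus `T³ = (ℝ/2πℤ)³` is modeled as `ℝ³ = Fin 3 → ℝ`; all functions involved
are required to be `2π`-periodic in each variable. -/
abbrev 𝕋 : Type := Fin 3 → ℝ

/-- The shift by `2π` times an integer vector (a period of the torus). -/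
def shift (v : Fin 3 → ℤ) : 𝕋 := fun i => 2 * Real.pi * (v i)

/-- A fundamental domain `(-π, π]³` of the torus, used as the integration domain. -/
def box : Set 𝕋 := Set.univ.pi fun _ => Set.Ioc (-Real.pi) Real.pi

lemma mbox : MeasurableSet box := MeasurableSet.univ_pi fun _ => measurableSet_Ioc

lemma box_subset_Icc : box ⊆ Set.Icc (fun _ => -Real.pi) (fun _ => Real.pi) := by
  intro x hx
  constructor <;> intro i
  · exact le_of_lt (hx i (Set.mem_univ i)).1
  · exact (hx i (Set.mem_univ i)).2

lemma boxfin : volume box < ⊤ := by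
  rw [box, volume_pi_pi]
  refine ENNReal.prod_lt_top fun i _ => ?_
  rw [Real.volume_Ioc]
  exact ENNReal.ofReal_lt_top

lemma contIntOn {g : 𝕋 → ℝ} (hg : Continuous g) : IntegrableOn g box :=
  (hg.continuousOn.integrableOn_compact isCompact_Icc).mono_set box_subset_Icc

lemma key (φ W : 𝕋 → ℝ) (hφ : Continuous φ) (hW : Continuous W)
    (M : ℝ) (hM : ∀ s, W s ≤ M)
    (hnull : volume {s : 𝕋 | W s = M} = 0)
    (hΩ : 0 < ∫ s in box, φ s ^ 2 / (M - W s))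
    (μ : ℝ) (hμ : 0 < μ) :
    ((∃ z : ℝ, M < z ∧ ∃ f : 𝕋 → ℝ,
        MemLp f 2 (volume.restrict box) ∧ ¬ f =ᵐ[volume.restrict box] 0 ∧
        (∀ᵐ q ∂(volume.restrict box),
          W q * f q + μ * φ q * ∫ t in box, φ t * f t = z * f q)) ↔ (∫ s in box, φ s ^ 2 / (M - W s))⁻¹ < μ) ∧
    (∀ z₁ z₂ : ℝ, M < z₁ → M < z₂ →
      (∃ f : 𝕋 → ℝ, MemLp f 2 (volume.restrict box) ∧ ¬ f =ᵐ[volume.restrict box] 0 ∧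
        (∀ᵐ q ∂(volume.restrict box),
          W q * f q + μ * φ q * ∫ t in box, φ t * f t = z₁ * f q)) →
      (∃ f : 𝕋 → ℝ, MemLp f 2 (volume.restrict box) ∧ ¬ f =ᵐ[volume.restrict box] 0 ∧
        (∀ᵐ q ∂(volume.restrict box),
          W q * f q + μ * φ q * ∫ t in box, φ t * f t = z₂ * f q)) →
      z₁ = z₂) ∧
    ((∃ z : ℝ, M < z ∧ 1 - μ * ∫ s in box, φ s ^ 2 / (z - W s) = 0) ↔
      (∫ s in box, φ s ^ 2 / (M - W s))⁻¹ < μ) ∧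
    (∀ z₁ z₂ : ℝ, M < z₁ → M < z₂ →
      1 - μ * ∫ s in box, φ s ^ 2 / (z₁ - W s) = 0 →
      1 - μ * ∫ s in box, φ s ^ 2 / (z₂ - W s) = 0 → z₁ = z₂) := by
  haveI hfin : IsFiniteMeasure (volume.restrict box) :=
    ⟨by rw [Measure.restrict_apply_univ]; exact boxfin⟩
  have hWae : ∀ᵐ s ∂(volume.restrict box), W s < M := by
    refine ae_restrict_of_ae ?_
    have : ∀ᵐ s : 𝕋 ∂volume, W s ≠ M := by
      rw [ae_iff]; simpa using hnull
    filter_upwards [this] with s hs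
    exact lt_of_le_of_ne (hM s) hs
  -- integrability for z > M
  have hZint : ∀ z : ℝ, M < z → IntegrableOn (fun s => φ s ^ 2 / (z - W s)) box := by
    intro z hz
    exact contIntOn ((hφ.pow 2).div (continuous_const.sub hW)
      (fun s => ne_of_gt (sub_pos.2 (lt_of_le_of_lt (hM s) hz))))
  have hMint : IntegrableOn (fun s => φ s ^ 2 / (M - W s)) box := by
    by_contra h
    rw [MeasureTheory.integral_undef h] at hΩ
    exact lt_irrefl 0 hΩ
  -- positivity of support of φ
  have hA : 0 < volume (Function.support φ ∩ box) := by
    have h1 : 0 < volume (Function.support (fun s => φ s ^ 2 / (M - W s)) ∩ box) := by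
      rw [← MeasureTheory.setIntegral_pos_iff_support_of_nonneg_ae ?_ hMint]
      · exact hΩ
      · exact Filter.Eventually.of_forall fun s =>
          div_nonneg (sq_nonneg _) (sub_nonneg.2 (hM s))
    refine lt_of_lt_of_le h1 (measure_mono (Set.inter_subset_inter_left _ ?_))
    intro s hs
    simp only [Function.mem_support] at hs ⊢
    intro h0
    apply hs
    rw [h0]
    simp
  -- strict antitonicity
  have hmono : ∀ z₁ z₂ : ℝ, M ≤ z₁ → z₁ < z₂ →
      (∫ s in box, φ s ^ 2 / (z₂ - W s)) < ∫ s in box, φ s ^ 2 / (z₁ - W s) := by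
    intro z₁ z₂ h1 h12
    have hint1 : IntegrableOn (fun s => φ s ^ 2 / (z₁ - W s)) box := by
      rcases eq_or_lt_of_le h1 with h | h
      · exact h ▸ hMint
      · exact hZint z₁ h
    have hint2 := hZint z₂ (lt_of_le_of_lt h1 h12)
    have hint12 : IntegrableOn (fun s => φ s ^ 2 / (z₁ - W s) - φ s ^ 2 / (z₂ - W s)) box :=
      hint1.sub hint2
    have hkey : 0 < ∫ s in box, (φ s ^ 2 / (z₁ - W s) - φ s ^ 2 / (z₂ - W s)) := by
      rw [MeasureTheory.setIntegral_pos_iff_support_of_nonneg_ae ?_ hint12]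
      · refine lt_of_lt_of_le
          (b := volume ((Function.support φ ∩ box) \ {s : 𝕋 | W s = M}))
          ?_ (measure_mono ?_)
        · rwa [measure_diff_null hnull]
        · rintro s ⟨⟨hsφ, hsb⟩, hsM⟩
          have hWs : W s < M := lt_of_le_of_ne (hM s) hsM
          have hd1 : 0 < z₁ - W s := sub_pos.2 (lt_of_lt_of_le hWs h1)
          have hd2 : 0 < z₂ - W s := sub_pos.2 (lt_of_lt_of_le hWs (le_of_lt (lt_of_le_of_lt h1 h12)))
          refine ⟨?_, hsb⟩
          simp only [Function.mem_support]
          have hlt : φ s ^ 2 / (z₂ - W s) < φ s ^ 2 / (z₁ - W s) := by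
            apply div_lt_div_of_pos_left
              (lt_of_le_of_ne (sq_nonneg _) (Ne.symm (pow_ne_zero 2 hsφ))) hd1 (by linarith)
          exact ne_of_gt (sub_pos.2 hlt)
      · filter_upwards [hWae] with s hs
        have hd1 : 0 < z₁ - W s := sub_pos.2 (lt_of_lt_of_le hs h1)
        have hd2 : 0 < z₂ - W s := by linarith
        have hle : φ s ^ 2 / (z₂ - W s) ≤ φ s ^ 2 / (z₁ - W s) := by gcongr
        simp only [Pi.zero_apply]
        linarith
    rw [MeasureTheory.integral_sub hint1 hint2] at hkey
    linarith
  -- continuity on (M, ∞)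
  have hcont : ∀ z : ℝ, M < z → ContinuousAt (fun y => ∫ s in box, φ s ^ 2 / (y - W s)) z := by
    intro z hz
    have hε : 0 < (z - M) / 2 := by linarith
    refine MeasureTheory.continuousAt_of_dominated
      (bound := fun s => φ s ^ 2 / ((z - M) / 2)) ?_ ?_ ?_ ?_
    · exact Filter.Eventually.of_forall fun x =>
        (((hφ.pow 2).measurable).div ((measurable_const.sub hW.measurable))).aestronglyMeasurable
    · have hev : ∀ᶠ x in 𝓝 z, (M + z) / 2 < x := eventually_gt_nhds (by linarith)
      filter_upwards [hev] with x hx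
      refine Filter.Eventually.of_forall fun s => ?_
      have hd : (z - M) / 2 ≤ x - W s := by have := hM s; linarith
      have hd0 : 0 < x - W s := lt_of_lt_of_le hε hd
      rw [Real.norm_eq_abs, abs_div, abs_of_nonneg (sq_nonneg _), abs_of_pos hd0]
      gcongr
    · exact contIntOn ((hφ.pow 2).div_const _)
    · refine Filter.Eventually.of_forall fun s => ?_
      have hd : z - W s ≠ 0 := ne_of_gt (sub_pos.2 (lt_of_le_of_lt (hM s) hz))
      exact (continuousAt_const.div ((continuous_sub_right (W s)).continuousAt) hd)
  -- approach from above : values near Ω(M)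
  have hlim : ∀ c : ℝ, c < (∫ s in box, φ s ^ 2 / (M - W s)) →
      ∃ a, M < a ∧ c < ∫ s in box, φ s ^ 2 / (a - W s) := by
    intro c hc
    have htend : Tendsto (fun n : ℕ => ∫ s in box, φ s ^ 2 / ((M + 1 / (n + 1)) - W s))
        atTop (𝓝 (∫ s in box, φ s ^ 2 / (M - W s))) := by
      refine MeasureTheory.integral_tendsto_of_tendsto_of_monotone
        (fun n => hZint _ (lt_add_of_pos_right M (by positivity))) hMint ?_ ?_
      · filter_upwards [hWae] with s hs
        intro n m hnm
        have h1 : (0:ℝ) < 1 / (n + 1) := by positivity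
        have h2 : (0:ℝ) < 1 / (m + 1) := by positivity
        have h3 : (1:ℝ) / (m + 1) ≤ 1 / (n + 1) := by
          apply one_div_le_one_div_of_le (by positivity)
          exact_mod_cast Nat.add_le_add_right hnm 1
        have hdm : 0 < M + 1 / (m + 1) - W s := by linarith
        exact div_le_div_of_nonneg_left (sq_nonneg _) hdm (by linarith)
      · filter_upwards [hWae] with s hs
        have hd : M - W s ≠ 0 := ne_of_gt (sub_pos.2 hs)
        refine Tendsto.div tendsto_const_nhds ?_ hd
        have : Tendsto (fun n : ℕ => (1:ℝ) / (n + 1)) atTop (𝓝 0) :=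
          tendsto_one_div_add_atTop_nhds_zero_nat
        have := ((tendsto_const_nhds (x := M)).add this).sub (tendsto_const_nhds (x := W s))
        simpa using this
    have := (htend.eventually (eventually_gt_nhds hc)).exists
    obtain ⟨n, hn⟩ := this
    exact ⟨M + 1 / (n + 1), lt_add_of_pos_right M (by positivity), hn⟩
  -- small values for large z
  have hsmall : ∃ b : ℝ, M < b ∧ (∫ s in box, φ s ^ 2 / (b - W s)) < μ⁻¹ := by
    set C := ∫ s in box, φ s ^ 2 with hC
    have hC0 : 0 ≤ C := MeasureTheory.setIntegral_nonneg mbox fun s _ => sq_nonneg _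
    have hb : M < M + μ * C + 1 := by nlinarith
    refine ⟨M + μ * C + 1, hb, ?_⟩
    have h1 : (∫ s in box, φ s ^ 2 / (M + μ * C + 1 - W s)) ≤
        ∫ s in box, φ s ^ 2 / (μ * C + 1) := by
      refine MeasureTheory.setIntegral_mono_on (hZint _ hb) (contIntOn ((hφ.pow 2).div_const _))
        mbox fun s _ => ?_
      have := hM s
      exact div_le_div_of_nonneg_left (sq_nonneg _) (by nlinarith) (by linarith)
    have h2 : (∫ s in box, φ s ^ 2 / (μ * C + 1)) = C / (μ * C + 1) := by
      rw [MeasureTheory.integral_div]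
    have h3 : C / (μ * C + 1) < μ⁻¹ := by
      rw [div_lt_iff₀ (by nlinarith)]
      have : μ⁻¹ * (μ * C + 1) = C + μ⁻¹ := by field_simp
      rw [this]
      have := inv_pos.2 hμ
      linarith
    linarith
  -- part 3
  have part3 : (∃ z : ℝ, M < z ∧ 1 - μ * ∫ s in box, φ s ^ 2 / (z - W s) = 0) ↔
      (∫ s in box, φ s ^ 2 / (M - W s))⁻¹ < μ := by
    constructor
    · rintro ⟨z, hz, he⟩
      have hΩz : (∫ s in box, φ s ^ 2 / (z - W s)) = μ⁻¹ := by
        field_simp at he ⊢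
        linarith
      have h2 := hmono M z le_rfl hz
      rw [hΩz] at h2
      exact inv_lt_of_inv_lt₀ hμ h2
    · intro h
      have h1 : μ⁻¹ < ∫ s in box, φ s ^ 2 / (M - W s) := inv_lt_of_inv_lt₀ hΩ h
      obtain ⟨a, ha, hca⟩ := hlim μ⁻¹ h1
      obtain ⟨b, hb, hcb⟩ := hsmall
      have hab : a ≤ b := by
        by_contra hab
        push_neg at hab
        have := hmono b a (le_of_lt hb) hab
        linarith
      have hIVT := intermediate_value_Icc' hab (fun x hx =>
        (hcont x (lt_of_lt_of_le ha hx.1)).continuousWithinAt)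
      obtain ⟨z, hzmem, hzeq⟩ := hIVT ⟨le_of_lt hcb, le_of_lt hca⟩
      refine ⟨z, lt_of_lt_of_le ha hzmem.1, ?_⟩
      have hzeq' : (∫ s in box, φ s ^ 2 / (z - W s)) = μ⁻¹ := hzeq
      rw [hzeq', mul_inv_cancel₀ (ne_of_gt hμ)]
      ring
  -- part 4
  have part4 : ∀ z₁ z₂ : ℝ, M < z₁ → M < z₂ →
      1 - μ * ∫ s in box, φ s ^ 2 / (z₁ - W s) = 0 →
      1 - μ * ∫ s in box, φ s ^ 2 / (z₂ - W s) = 0 → z₁ = z₂ := by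
    intro z₁ z₂ h1 h2 e1 e2
    by_contra hne
    rcases lt_or_gt_of_ne hne with h | h
    · have := hmono z₁ z₂ (le_of_lt h1) h
      nlinarith
    · have := hmono z₂ z₁ (le_of_lt h2) h
      nlinarith
  -- eigenvalue equivalence
  have eigen_iff : ∀ z : ℝ, M < z →
      ((∃ f : 𝕋 → ℝ, MemLp f 2 (volume.restrict box) ∧ ¬ f =ᵐ[volume.restrict box] 0 ∧
        (∀ᵐ q ∂(volume.restrict box),
          W q * f q + μ * φ q * ∫ t in box, φ t * f t = z * f q)) ↔
        1 - μ * ∫ s in box, φ s ^ 2 / (z - W s) = 0) := by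
    intro z hz
    have hWz : ∀ q, W q < z := fun q => lt_of_le_of_lt (hM q) hz
    have hd : ∀ q, z - W q ≠ 0 := fun q => ne_of_gt (sub_pos.2 (hWz q))
    constructor
    · rintro ⟨f, hf2, hfne, hfeq⟩
      set c := ∫ t in box, φ t * f t with hc
      by_cases hc0 : c = 0
      · exfalso
        apply hfne
        filter_upwards [hfeq] with q hq
        rw [hc0] at hq
        have : (z - W q) * f q = 0 := by ring_nf; linarith
        have := (mul_eq_zero.mp this).resolve_left (hd q)
        simpa using this
      · have hfae : f =ᵐ[volume.restrict box] fun q => μ * c * φ q / (z - W q) := by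
          filter_upwards [hfeq] with q hq
          show f q = μ * c * φ q / (z - W q)
          rw [eq_div_iff (hd q)]
          linear_combination -hq
        have hstep : c = μ * c * ∫ s in box, φ s ^ 2 / (z - W s) := by
          have e1 : c = ∫ t in box, φ t * (μ * c * φ t / (z - W t)) := by
            rw [hc]
            refine MeasureTheory.integral_congr_ae ?_
            filter_upwards [hfae] with q hq
            rw [hq]
          have e2a : (∫ t in box, φ t * (μ * c * φ t / (z - W t)))
              = ∫ t in box, μ * c * (φ t ^ 2 / (z - W t)) :=
            MeasureTheory.integral_congr_ae (Filter.Eventually.of_forall fun t => by ring)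
          have e2b : (∫ t in box, μ * c * (φ t ^ 2 / (z - W t)))
              = μ * c * ∫ s in box, φ s ^ 2 / (z - W s) :=
            MeasureTheory.integral_const_mul _ _
          exact e1.trans (e2a.trans e2b)
        have : c * (1 - μ * ∫ s in box, φ s ^ 2 / (z - W s)) = 0 := by
          nlinarith [hstep]
        have := (mul_eq_zero.mp this).resolve_left hc0
        exact this
    · intro he
      have hΩz : (∫ s in box, φ s ^ 2 / (z - W s)) = μ⁻¹ := by
        field_simp at he ⊢
        linarith
      refine ⟨fun q => φ q / (z - W q), ?_, ?_, ?_⟩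
      · -- Memℒp
        obtain ⟨C, hC⟩ := (isCompact_Icc (a := fun _ : Fin 3 => -Real.pi)
          (b := fun _ => Real.pi)).exists_bound_of_continuousOn hφ.continuousOn
        refine MemLp.of_bound ?_ (C / (z - M)) ?_
        · exact (hφ.div (continuous_const.sub hW) hd).aestronglyMeasurable
        · filter_upwards [ae_restrict_mem mbox] with q hq
          have hq' : q ∈ Set.Icc (fun _ : Fin 3 => -Real.pi) (fun _ => Real.pi) :=
            box_subset_Icc hq
          have h1 : |φ q| ≤ C := by simpa [Real.norm_eq_abs] using hC q hq'
          have h2 : 0 < z - M := sub_pos.2 hz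
          have h3 : z - M ≤ z - W q := by have := hM q; linarith
          rw [Real.norm_eq_abs, abs_div, abs_of_pos (sub_pos.2 (hWz q))]
          exact div_le_div₀ (le_trans (abs_nonneg _) h1) h1 h2 h3
      · -- nontrivial
        intro hf0
        have : (fun s => φ s ^ 2 / (M - W s)) =ᵐ[volume.restrict box] 0 := by
          filter_upwards [hf0] with q hq
          have hq' : φ q / (z - W q) = 0 := hq
          have : φ q = 0 := by
            rcases div_eq_zero_iff.mp hq' with h | h
            · exact h
            · exact absurd h (hd q)
          simp [this]
        have := MeasureTheory.integral_eq_zero_of_ae this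
        rw [this] at hΩ
        exact lt_irrefl 0 hΩ
      · -- eigen equation
        have hint : (∫ t in box, φ t * (φ t / (z - W t))) = μ⁻¹ := by
          rw [← hΩz]
          refine MeasureTheory.integral_congr_ae (Filter.Eventually.of_forall fun t => ?_)
          field_simp
        refine Filter.Eventually.of_forall fun q => ?_
        rw [hint]
        have hdq := hd q
        field_simp
        ring
  refine ⟨?_, ?_, part3, part4⟩
  · constructor
    · rintro ⟨z, hz, hf⟩
      exact part3.mp ⟨z, hz, (eigen_iff z hz).mp hf⟩
    · intro h
      obtain ⟨z, hz, he⟩ := part3.mpr h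
      exact ⟨z, hz, (eigen_iff z hz).mpr he⟩
  · intro z₁ z₂ h1 h2 e1 e2
    exact part4 z₁ z₂ h1 h2 ((eigen_iff z₁ h1).mp e1) ((eigen_iff z₂ h2).mp e2)


/-- Let `p ∈ U_δ(p₀)` and `μ > 0`.  The operator `H_μ(p)` has an
eigenvalue in `(M(p), ∞)` if and only if `μ > μ(p)`, and in that case the eigenvalue is
unique; equivalently `Δ(μ,p;z) = 0` has a solution `z ∈ (M(p), ∞)` iff `μ > μ(p)`, and
then the solution is unique. -/
theorem statement13
    (φ : 𝕋 → ℝ)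
    (hφa : AnalyticOnNhd ℝ φ Set.univ)
    (hφper : ∀ (x : 𝕋) (v : Fin 3 → ℤ), φ (x + shift v) = φ x)
    (hφnt : φ ≠ 0)
    (w : 𝕋 → 𝕋 → ℝ)
    (hwa : AnalyticOnNhd ℝ (fun x : 𝕋 × 𝕋 => w x.1 x.2) Set.univ)
    (hwper : ∀ (p q : 𝕋) (v u : Fin 3 → ℤ), w (p + shift v) (q + shift u) = w p q)
    (p₀ q₀ : 𝕋)
    (hmax : ∀ p q : 𝕋, w p q ≤ w p₀ q₀)
    (huniq : ∀ p q : 𝕋, w p q = w p₀ q₀ →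
      ∃ v u : Fin 3 → ℤ, p = p₀ + shift v ∧ q = q₀ + shift u)
    (hgrad : fderiv ℝ (fun x : 𝕋 × 𝕋 => w x.1 x.2) (p₀, q₀) = 0)
    (hhess : ∀ v : 𝕋 × 𝕋, v ≠ 0 →
      iteratedFDeriv ℝ 2 (fun x : 𝕋 × 𝕋 => w x.1 x.2) (p₀, q₀) ![v, v] < 0)
    (δ : ℝ) (hδ : 0 < δ) (q0 : 𝕋 → 𝕋)
    (hq0a : AnalyticOnNhd ℝ q0 (Metric.ball p₀ δ))
    (hq0max : ∀ p ∈ Metric.ball p₀ δ, ∀ q : 𝕋, w p q ≤ w p (q0 p))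
    (hq0uniq : ∀ p ∈ Metric.ball p₀ δ, ∀ q : 𝕋, w p q = w p (q0 p) →
      ∃ v : Fin 3 → ℤ, q = q0 p + shift v)
    (hq0grad : ∀ p ∈ Metric.ball p₀ δ, fderiv ℝ (w p) (q0 p) = 0)
    (hq0hess : ∀ p ∈ Metric.ball p₀ δ, ∀ v : 𝕋, v ≠ 0 →
      iteratedFDeriv ℝ 2 (w p) (q0 p) ![v, v] < 0)
    (p : 𝕋) (hp : p ∈ Metric.ball p₀ δ) (μ : ℝ) (hμ : 0 < μ)
    (hΩ : 0 < (∫ s in box, φ s ^ 2 / (w p (q0 p) - w p s))) :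
    ((∃ z : ℝ, w p (q0 p) < z ∧ ∃ f : 𝕋 → ℝ,
        MemLp f 2 (volume.restrict box) ∧ ¬ f =ᵐ[volume.restrict box] 0 ∧
        (∀ᵐ q ∂(volume.restrict box),
          w p q * f q + μ * φ q * ∫ t in box, φ t * f t = z * f q)) ↔ (∫ s in box, φ s ^ 2 / (w p (q0 p) - w p s))⁻¹ < μ) ∧
    (∀ z₁ z₂ : ℝ, w p (q0 p) < z₁ → w p (q0 p) < z₂ →
      (∃ f : 𝕋 → ℝ, MemLp f 2 (volume.restrict box) ∧ ¬ f =ᵐ[volume.restrict box] 0 ∧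
        (∀ᵐ q ∂(volume.restrict box),
          w p q * f q + μ * φ q * ∫ t in box, φ t * f t = z₁ * f q)) →
      (∃ f : 𝕋 → ℝ, MemLp f 2 (volume.restrict box) ∧ ¬ f =ᵐ[volume.restrict box] 0 ∧
        (∀ᵐ q ∂(volume.restrict box),
          w p q * f q + μ * φ q * ∫ t in box, φ t * f t = z₂ * f q)) →
      z₁ = z₂) ∧
    ((∃ z : ℝ, w p (q0 p) < z ∧ 1 - μ * ∫ s in box, φ s ^ 2 / (z - w p s) = 0) ↔
      (∫ s in box, φ s ^ 2 / (w p (q0 p) - w p s))⁻¹ < μ) ∧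
    (∀ z₁ z₂ : ℝ, w p (q0 p) < z₁ → w p (q0 p) < z₂ →
      1 - μ * ∫ s in box, φ s ^ 2 / (z₁ - w p s) = 0 →
      1 - μ * ∫ s in box, φ s ^ 2 / (z₂ - w p s) = 0 → z₁ = z₂) := by
  have hφc : Continuous φ := continuousOn_univ.mp hφa.continuousOn
  have hwc : Continuous (fun x : 𝕋 × 𝕋 => w x.1 x.2) :=
    continuousOn_univ.mp hwa.continuousOn
  have hWc : Continuous (w p) := hwc.comp (Continuous.prodMk_right p)
  have hnull : volume {s : 𝕋 | w p s = w p (q0 p)} = 0 := by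
    refine measure_mono_null (fun s hs => ?_)
      ((Set.countable_range (fun v : Fin 3 → ℤ => q0 p + shift v)).measure_zero _)
    obtain ⟨v, hv⟩ := hq0uniq p hp s hs
    exact ⟨v, hv.symm⟩
  exact key φ (w p) hφc hWc (w p (q0 p)) (hq0max p hp) hnull hΩ μ hμ
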